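/- Let κ be a regular uncountable cardinal. If principle C(κ) holds, then principle D(κ) holds. -/

import Mathlib

open Cardinal

/-- `C` is closed and unbounded (club) in the ordinal `o`. -/
def ClubIn (o : Ordinal) (C : Set Ordinal) : Prop :=
  C ⊆ Set.Iio o ∧ (∀ α < o, ∃ β ∈ C, α < β) ∧
    ∀ α < o, 0 < α → (∀ β < α, ∃ γ ∈ C, β < γ ∧ γ < α) → α ∈ C

/-- `S` is a stationary subset of the ordinal `o`: it meets every club subset of `o`. -/
def StationaryIn (o : Ordinal) (S : Set Ordinal) : Prop :=
  S ⊆ Set.Iio o ∧ ∀ C, ClubIn o C → (S ∩ C).Nonempty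

/-- `S` is a cofinal (unbounded) subset of the ordinal `o`. -/
def CofinalIn (o : Ordinal) (S : Set Ordinal) : Prop :=
  S ⊆ Set.Iio o ∧ ∀ α < o, ∃ β ∈ S, α < β

/-- For a matrix `A` of subsets of `ℕ`, a finite sequence `t ∈ ω^{<ω}` and
`s : {0,…,|t|-1} → Ordinal`, this is `A[s,t] = ⋂_{i<|t|} A(s i, t i)`. -/
def MatInt (A : Ordinal → ℕ → Set ℕ) (t : List ℕ) (s : Fin t.length → Ordinal) : Set ℕ :=
  ⋂ i, A (s i) (t.get i)

/-- Principle C(κ). -/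
def PrincipleC (κ : Cardinal) : Prop :=
  ∀ (T : Set (List ℕ)) (A : Ordinal → ℕ → Set ℕ),
    (∃ S : Set Ordinal, StationaryIn κ.ord S ∧
      ∀ t ∈ T, ∀ s : Fin t.length → Ordinal, Function.Injective s →
        (∀ i, s i ∈ S) → (MatInt A t s).Nonempty) ∨
    (∃ t ∈ T, ∃ D : Fin t.length → Set Ordinal,
      (∀ i, StationaryIn κ.ord (D i)) ∧
      ∀ s : Fin t.length → Ordinal, Function.Injective s →
        (∀ i, s i ∈ D i) → MatInt A t s = ∅)

/-- A family of subsets of `ℕ` is centered if every finite subfamily has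
nonempty intersection. -/
def Centered (L : Set (Set ℕ)) : Prop :=
  ∀ F : Finset (Set ℕ), ↑F ⊆ L → (⋂₀ (F : Set (Set ℕ))).Nonempty

/-- The restriction of the matrix `A` to `S` is ω-adic. -/
def OmegaAdicOn (A : Ordinal → ℕ → Set ℕ) (S : Set Ordinal) : Prop :=
  ∀ (t : List ℕ) (s : Fin t.length → Ordinal), Function.Injective s →
    (∀ i, s i ∈ S) → (MatInt A t s).Nonempty

/-- `L_st(A)`: the sets `Y ⊆ ℕ` such that `{α < κ : ∃ n, A(α,n) ⊆ Y}` is stationary in `κ`. -/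
def Lst (κ : Cardinal) (A : Ordinal → ℕ → Set ℕ) : Set (Set ℕ) :=
  {Y : Set ℕ | StationaryIn κ.ord {α : Ordinal | α < κ.ord ∧ ∃ n : ℕ, A α n ⊆ Y}}

/-- Principle D(κ). -/
def PrincipleD (κ : Cardinal) : Prop :=
  ∀ A : Ordinal → ℕ → Set ℕ, Centered (Lst κ A) →
    ∃ S : Set Ordinal, StationaryIn κ.ord S ∧ OmegaAdicOn A S

/-- A superset of a stationary set (still inside `Iio o`) is stationary. -/
lemma stationary_mono {o : Ordinal} {S S' : Set Ordinal} (h : StationaryIn o S)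
    (hsub : S ⊆ S') (h' : S' ⊆ Set.Iio o) : StationaryIn o S' := by
  refine ⟨h', fun C hC => ?_⟩
  obtain ⟨x, hx1, hx2⟩ := h.2 C hC
  exact ⟨x, hsub hx1, hx2⟩

/-- The tail intersection of a club with `Ioo β o` is a club. -/
lemma club_tail {o β : Ordinal} (hβ : β < o) {C : Set Ordinal} (hC : ClubIn o C) :
    ClubIn o (C ∩ Set.Ioo β o) := by
  obtain ⟨hsub, hunb, hcl⟩ := hC
  refine ⟨fun x hx => hsub hx.1, fun α hα => ?_, fun α hα hpos H => ?_⟩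
  · obtain ⟨γ, hγC, hγ⟩ := hunb (max α β) (max_lt hα hβ)
    exact ⟨γ, ⟨hγC, lt_of_le_of_lt (le_max_right _ _) hγ, hsub hγC⟩,
      lt_of_le_of_lt (le_max_left _ _) hγ⟩
  · have hαC : α ∈ C := hcl α hα hpos (fun b hb => by
      obtain ⟨γ, hγ, h1, h2⟩ := H b hb
      exact ⟨γ, hγ.1, h1, h2⟩)
    obtain ⟨γ, hγ, _, h2⟩ := H 0 hpos
    exact ⟨hαC, lt_trans hγ.2.1 h2, hα⟩

/-- If finitely many nonempty sets of ordinals admit no injective system of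
representatives, then Hall's condition fails. -/
lemma hall_violation {n : ℕ} (W : Fin n → Set Ordinal)
    (hW : ∀ i, (W i).Nonempty)
    (hno : ¬ ∃ s : Fin n → Ordinal, Function.Injective s ∧ ∀ i, s i ∈ W i) :
    ∃ (I : Finset (Fin n)) (G : Finset Ordinal),
      I.Nonempty ∧ G.card < I.card ∧ ∀ i ∈ I, W i ⊆ ↑G := by
  classical
  by_contra hviol
  push_neg at hviol
  have hTex : ∀ i : Fin n, ∃ T : Finset Ordinal, ↑T ⊆ W i ∧
      ((W i).Finite → ↑T = W i) ∧ (¬ (W i).Finite → T.card = n) := by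
    intro i
    by_cases h : (W i).Finite
    · exact ⟨h.toFinset, by simp, fun _ => by simp, fun h' => absurd h h'⟩
    · obtain ⟨T, hT1, hT2⟩ := Set.Infinite.exists_subset_card_eq h n
      exact ⟨T, hT1, fun h' => absurd h' h, fun _ => hT2⟩
  choose T hT1 hT2 hT3 using hTex
  have hhall : ∀ s : Finset (Fin n), s.card ≤ (s.biUnion T).card := by
    intro s
    by_contra hlt
    push_neg at hlt
    have hsne : s.Nonempty := Finset.card_pos.mp (lt_of_le_of_lt (Nat.zero_le _) hlt)
    obtain ⟨i, hi, hnsub⟩ := hviol s (s.biUnion T) hsne hlt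
    have hsubU : ↑(T i) ⊆ (↑(s.biUnion T) : Set Ordinal) := by
      intro a ha
      simp only [Finset.coe_biUnion, Set.mem_iUnion]
      exact ⟨i, hi, ha⟩
    by_cases hfin : (W i).Finite
    · exact hnsub (by rw [← hT2 i hfin]; exact hsubU)
    · have e := hT3 i hfin
      have h1 : (T i).card ≤ (s.biUnion T).card :=
        Finset.card_le_card (fun a ha => Finset.mem_biUnion.mpr ⟨i, hi, ha⟩)
      have h2 : s.card ≤ n := by
        simpa using Finset.card_le_univ s
      omega
  obtain ⟨f, hfinj, hfmem⟩ :=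
    (Finset.all_card_le_biUnion_card_iff_existsInjective' T).mp hhall
  exact hno ⟨f, hfinj, fun i => hT1 i (hfmem i)⟩

/-- A countable subset of `Iio κ.ord` is bounded below `κ.ord` for regular uncountable `κ`. -/
lemma countable_bounded {κ : Cardinal} (hreg : κ.IsRegular) (hunc : ℵ₀ < κ)
    {F : Set Ordinal} (hF : F.Countable) (hFsub : F ⊆ Set.Iio κ.ord) :
    ∃ β < κ.ord, ∀ γ ∈ F, γ ≤ β := by
  have h0 : (0 : Ordinal) < κ.ord := (Cardinal.isSuccLimit_ord hreg.aleph0_le).bot_lt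
  rcases F.eq_empty_or_nonempty with h | h
  · exact ⟨0, h0, by simp [h]⟩
  obtain ⟨f, rfl⟩ := hF.exists_eq_range h
  have hlt : ∀ i : ℕ, f i < κ.ord := fun i => hFsub ⟨i, rfl⟩
  have hmk : Cardinal.lift (Cardinal.mk ℕ) < κ.ord.cof := by
    rw [hreg.cof_eq, Cardinal.mk_nat, Cardinal.lift_aleph0]
    exact hunc
  refine ⟨⨆ i, f i, Ordinal.iSup_lt_ord_lift hmk hlt, fun γ hγ => ?_⟩
  obtain ⟨i, rfl⟩ := hγ
  exact le_ciSup (Ordinal.bddAbove_range f) i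

/-- If κ is a regular uncountable cardinal and C(κ) holds, then D(κ) holds. -/
theorem statement_0 (κ : Cardinal) (hreg : κ.IsRegular) (hunc : ℵ₀ < κ)
    (hC : PrincipleC κ) : PrincipleD κ := by
  intro A hcent
  rcases hC Set.univ A with ⟨S, hS, hAd⟩ | ⟨t, -, D, hD, hkey⟩
  · exact ⟨S, hS, fun t s hs hmem => hAd t (Set.mem_univ t) s hs hmem⟩
  exfalso
  classical
  rcases Nat.eq_zero_or_pos t.length with h0 | hpos
  · haveI : IsEmpty (Fin t.length) := by rw [h0]; infer_instance
    have he := hkey (fun _ => 0) (Function.injective_of_subsingleton _)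
      (fun i => isEmptyElim i)
    have : (0 : ℕ) ∈ MatInt A t (fun _ => 0) := by
      simp [MatInt]
    rw [he] at this
    exact this
  -- witness sets
  set Wd : ℕ → Fin t.length → Set Ordinal :=
    fun x i => {α | α ∈ D i ∧ x ∈ A α (t.get i)} with hWd
  have hnoSDR : ∀ x : ℕ, (∀ i, (Wd x i).Nonempty) →
      ∃ (I : Finset (Fin t.length)) (G : Finset Ordinal),
        I.Nonempty ∧ G.card < I.card ∧ ∀ i ∈ I, Wd x i ⊆ ↑G := by
    intro x hx
    apply hall_violation _ hx
    rintro ⟨s, hs, hmem⟩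
    have hxm : x ∈ MatInt A t s := Set.mem_iInter.2 fun i => (hmem i).2
    rw [hkey s hs (fun i => (hmem i).1)] at hxm
    exact hxm
  set P : ℕ → Prop := fun x => ∀ i, (Wd x i).Nonempty with hP
  have hblk : ∀ x : ℕ, ∃ (I : Finset (Fin t.length)) (G : Finset Ordinal),
      (P x → I.Nonempty ∧ G.card < I.card ∧ ∀ i ∈ I, Wd x i ⊆ ↑G) := by
    intro x
    by_cases h : P x
    · obtain ⟨I, G, hIG⟩ := hnoSDR x h
      exact ⟨I, G, fun _ => hIG⟩
    · exact ⟨∅, ∅, fun h' => absurd h' h⟩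
  choose I G hIG using hblk
  set F : Set Ordinal := ⋃ x : ℕ, ↑(G x) with hF
  have hFc : F.Countable := Set.countable_iUnion (fun x => (G x).countable_toSet)
  have hF'c : (F ∩ Set.Iio κ.ord).Countable := hFc.mono Set.inter_subset_left
  obtain ⟨β, hβo, hβ⟩ := countable_bounded hreg hunc hF'c Set.inter_subset_right
  -- shrink the stationary sets
  set E : Fin t.length → Set Ordinal := fun i => D i \ F with hE
  have hEstat : ∀ i, StationaryIn κ.ord (E i) := by
    intro i
    refine ⟨fun α hα => (hD i).1 hα.1, fun C hC => ?_⟩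
    obtain ⟨γ, hγD, hγC, hγβ, _⟩ := (hD i).2 _ (club_tail hβo hC)
    refine ⟨γ, ⟨hγD, fun hγF => ?_⟩, hγC⟩
    exact absurd (hβ γ ⟨hγF, (hD i).1 hγD⟩) (not_le.mpr hγβ)
  set Y : Fin t.length → Set ℕ := fun i => ⋃ α ∈ E i, A α (t.get i) with hY
  have hYL : ∀ i, Y i ∈ Lst κ A := by
    intro i
    refine stationary_mono (hEstat i) (fun α hα => ?_) (fun α hα => hα.1)
    exact ⟨(hD i).1 hα.1, t.get i, Set.subset_biUnion_of_mem (u := fun α => A α (t.get i)) hα⟩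
  -- apply centeredness
  obtain ⟨x, hx⟩ := hcent (Finset.image Y Finset.univ) (by
    intro Z hZ
    simp only [Finset.coe_image, Set.mem_image, Finset.coe_univ, Set.mem_univ] at hZ
    obtain ⟨i, _, rfl⟩ := hZ
    exact hYL i)
  have hxY : ∀ i, x ∈ Y i := by
    intro i
    exact hx (Y i) (by simp)
  have hPx : P x := by
    intro i
    obtain ⟨α, hαE, hxA⟩ := Set.mem_iUnion₂.mp (hxY i)
    exact ⟨α, hαE.1, hxA⟩
  obtain ⟨⟨i, hi⟩, -, hsubG⟩ := hIG x hPx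
  obtain ⟨α, hαE, hxA⟩ := Set.mem_iUnion₂.mp (hxY i)
  have hαW : α ∈ Wd x i := ⟨hαE.1, hxA⟩
  have hαG : α ∈ F := Set.mem_iUnion.mpr ⟨x, hsubG i hi hαW⟩
  exact hαE.2 hαG
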